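/- arXiv:1909.07279 — 2 statements merged into one kernel-verified Lean document; each statement's English description precedes it below -/
import Mathlib

section
/- For any real number t and any Δ>0, the sum over all integers k of sinc²(Δt − k) equals 1. -/
open Real

noncomputable def sinc (x : ℝ) : ℝ := if x = 0 then 1 else Real.sin (π * x) / (π * x)

lemma abs_sin_le_abs' {x : ℝ} (h : 0 ≤ x) : |Real.sin x| ≤ |x| := by
  rw [abs_of_nonneg h]
  refine abs_le.2 ⟨?_, Real.sin_le h⟩
  rcases le_or_gt x 1 with h1 | h1
  · have : 0 ≤ Real.sin x := Real.sin_nonneg_of_nonneg_of_le_pi h (by linarith [Real.pi_gt_three])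
    linarith
  · linarith [Real.neg_one_le_sin x]

lemma abs_sin_le_abs (x : ℝ) : |Real.sin x| ≤ |x| := by
  rcases le_or_gt 0 x with h | h
  · exact abs_sin_le_abs' h
  · have := abs_sin_le_abs' (neg_nonneg.2 h.le)
    rwa [Real.sin_neg, abs_neg, abs_neg] at this

lemma sinc_zero : _root_.sinc 0 = 1 := if_pos rfl

lemma abs_sinc_le_one (x : ℝ) : |_root_.sinc x| ≤ 1 := by
  unfold _root_.sinc
  split_ifs with h
  · simp
  · rw [abs_div]
    have hπx : |π * x| ≠ 0 := by
      simp [abs_ne_zero]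
      exact h
    exact div_le_one_of_le₀ (abs_sin_le_abs _) (abs_nonneg _)

lemma sinc_sq_le_one (x : ℝ) : _root_.sinc x ^ 2 ≤ 1 := by
  have := _root_.abs_sinc_le_one x
  nlinarith [abs_nonneg (_root_.sinc x), sq_abs (_root_.sinc x)]

lemma abs_sinc_le (x : ℝ) (hx : x ≠ 0) : |_root_.sinc x| ≤ 1 / (π * |x|) := by
  rw [_root_.sinc, if_neg hx, abs_div]
  rw [div_le_div_iff₀ (by positivity) (by positivity)]
  calc |Real.sin (π * x)| * (π * |x|) ≤ 1 * (π * |x|) := by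
        nlinarith [Real.abs_sin_le_one (π * x), mul_pos Real.pi_pos (abs_pos.2 hx)]
    _ = π * |x| := one_mul _
    _ ≤ 1 * |π * x| := by rw [abs_mul, abs_of_pos Real.pi_pos, one_mul]

lemma sinc_sq_le (x : ℝ) (hx : x ≠ 0) : _root_.sinc x ^ 2 ≤ 1 / (π ^ 2 * x ^ 2) := by
  have h := abs_sinc_le x hx
  have h0 : (0:ℝ) ≤ 1 / (π * |x|) := by positivity
  have h2 := mul_le_mul h h (abs_nonneg _) h0
  calc _root_.sinc x ^ 2 = |_root_.sinc x| * |_root_.sinc x| := by rw [← abs_mul, abs_mul_self, sq]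
    _ ≤ 1 / (π * |x|) * (1 / (π * |x|)) := h2
    _ = 1 / (π ^ 2 * x ^ 2) := by
        rw [div_mul_div_comm, one_mul]
        congr 1
        rw [mul_mul_mul_comm, ← sq, ← sq, sq_abs]

lemma sinc_eq_of_ne {x : ℝ} (hx : x ≠ 0) : _root_.sinc x = Real.sin (π * x) / (π * x) := if_neg hx

lemma sinc_continuous : Continuous _root_.sinc := by
  rw [continuous_iff_continuousAt]
  intro x
  rcases eq_or_ne x 0 with rfl | hx
  · -- continuity at 0
    rw [ContinuousAt, _root_.sinc_zero, ← nhdsNE_sup_pure]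
    refine Filter.Tendsto.sup ?_ ?_
    · have hd : HasDerivAt Real.sin 1 0 := by simpa using Real.hasDerivAt_sin 0
      have h1 : Filter.Tendsto (fun t : ℝ => t⁻¹ • (Real.sin (0 + t) - Real.sin 0))
          (nhdsWithin 0 {0}ᶜ) (nhds 1) := hd.tendsto_slope_zero
      have h2 : Filter.Tendsto (fun x : ℝ => π * x) (nhdsWithin 0 {0}ᶜ) (nhdsWithin 0 {0}ᶜ) := by
        apply Filter.Tendsto.inf
        · exact (continuous_const.mul continuous_id).tendsto' 0 0 (by simp)
        · rw [Filter.tendsto_principal]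
          filter_upwards [Filter.mem_principal_self _] with y hy
          simp only [Set.mem_compl_iff, Set.mem_singleton_iff] at hy ⊢
          exact mul_ne_zero Real.pi_ne_zero hy
      have h3 := h1.comp h2
      refine (h3.congr' ?_)
      filter_upwards [self_mem_nhdsWithin] with y hy
      simp only [Set.mem_compl_iff, Set.mem_singleton_iff] at hy
      rw [sinc_eq_of_ne hy]
      simp [Function.comp, smul_eq_mul, div_eq_inv_mul]
    · rw [Filter.tendsto_pure_left]
      intro s hs
      exact mem_of_mem_nhds (by simpa [_root_.sinc_zero] using hs)
  · have : ∀ᶠ y in nhds x, _root_.sinc y = Real.sin (π * y) / (π * y) := by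
      filter_upwards [isOpen_compl_singleton.mem_nhds hx] with y hy
      exact sinc_eq_of_ne hy
    rw [continuousAt_congr this]
    exact ContinuousAt.div (by fun_prop) (by fun_prop) (by simp [Real.pi_ne_zero, hx])

lemma sinc_duplication (x : ℝ) : _root_.sinc x = Real.cos (π * x / 2) * _root_.sinc (x / 2) := by
  rcases eq_or_ne x 0 with rfl | hx
  · simp [_root_.sinc_zero]
  · have hx2 : x / 2 ≠ 0 := div_ne_zero hx two_ne_zero
    rw [sinc_eq_of_ne hx, sinc_eq_of_ne hx2]
    have h : π * x = 2 * (π * (x / 2)) := by ring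
    rw [h, Real.sin_two_mul]
    have : π * (x / 2) = π * x / 2 := by ring
    rw [this]
    field_simp

lemma sinc_int_ne {k : ℤ} (hk : k ≠ 0) : _root_.sinc (k : ℝ) = 0 := by
  have hk' : (k : ℝ) ≠ 0 := Int.cast_ne_zero.2 hk
  rw [sinc_eq_of_ne hk', mul_comm, Real.sin_int_mul_pi, zero_div]

-- sin(πx)² unchanged by integer shift
lemma sin_pi_sub_int_sq (x : ℝ) (k : ℤ) : Real.sin (π * (x - k)) ^ 2 = Real.sin (π * x) ^ 2 := by
  have : π * (x - k) = π * x - k * π := by ring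
  rw [this, Real.sin_sub, Real.sin_int_mul_pi]
  have h : Real.cos ((k:ℝ) * π) ^ 2 = 1 := by
    have := Real.sin_sq_add_cos_sq ((k:ℝ) * π)
    rw [Real.sin_int_mul_pi] at this
    linarith
  nlinarith [h]

lemma cos_sub_int_mul_pi_sq (a : ℝ) (m : ℤ) : Real.cos (a - m * π) ^ 2 = Real.cos a ^ 2 := by
  rw [Real.cos_sub, Real.sin_int_mul_pi]
  have h : Real.cos ((m:ℝ) * π) ^ 2 = 1 := by
    have := Real.sin_sq_add_cos_sq ((m:ℝ) * π)
    rw [Real.sin_int_mul_pi] at this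
    linarith
  ring_nf
  nlinarith [h]

lemma summable_inv_sq_shift (c : ℝ) : Summable (fun k : ℤ => 1 / ((k:ℝ) - c) ^ 2) := by
  have hg : Summable (fun n : ℤ => |(n:ℝ)| ^ (-(2:ℝ))) := Real.summable_abs_int_rpow one_lt_two
  refine summable_of_isBigO hg ?_
  rw [Asymptotics.isBigO_iff]
  refine ⟨4, ?_⟩
  have hfin : {k : ℤ | ¬ (2 * |c| + 1 ≤ |(k:ℝ)|)}.Finite := by
    have : {k : ℤ | ¬ (2 * |c| + 1 ≤ |(k:ℝ)|)} ⊆ {k : ℤ | |(k:ℝ)| < 2 * |c| + 1} := by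
      intro k hk; simpa using hk
    refine Set.Finite.subset ?_ this
    have : {k : ℤ | |(k:ℝ)| < 2 * |c| + 1} ⊆ Set.Icc (⌈-(2*|c|+1)⌉) (⌊2*|c|+1⌋) := by
      intro k hk
      simp only [Set.mem_setOf_eq, abs_lt] at hk
      constructor
      · exact Int.ceil_le.2 (by exact_mod_cast hk.1.le)
      · exact Int.le_floor.2 (by exact_mod_cast hk.2.le)
    exact (Set.finite_Icc _ _).subset this
  rw [Filter.eventually_cofinite]
  refine hfin.subset ?_
  intro k hk
  simp only [Set.mem_setOf_eq] at hk ⊢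
  intro hge
  apply hk
  -- |k| ≥ 2|c|+1 ⇒ |k − c| ≥ |k|/2 ⇒ 1/(k−c)² ≤ 4/|k|²
  have h1 : |(k:ℝ)| / 2 ≤ |(k:ℝ) - c| := by
    have := abs_sub_abs_le_abs_sub (k:ℝ) c
    have h2 : |c| ≤ |(k:ℝ)| / 2 := by linarith
    linarith
  have hk0 : (0:ℝ) < |(k:ℝ)| := by
    have : (0:ℝ) ≤ |c| := abs_nonneg c
    linarith
  have hrpow : |(k:ℝ)| ^ (-(2:ℝ)) = (|(k:ℝ)| ^ (2:ℕ))⁻¹ := by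
    rw [← Real.rpow_natCast |(k:ℝ)| 2, ← Real.rpow_neg hk0.le]
    norm_num
  rw [Real.norm_eq_abs, Real.norm_eq_abs, hrpow]
  have hkc : (0:ℝ) < |(k:ℝ) - c| := by linarith
  have hsq : |(k:ℝ)| ^ 2 / 4 ≤ ((k:ℝ) - c) ^ 2 := by
    have := mul_le_mul h1 h1 (by positivity) (abs_nonneg _)
    calc |(k:ℝ)| ^ 2 / 4 = (|(k:ℝ)|/2) * (|(k:ℝ)|/2) := by ring
      _ ≤ |(k:ℝ) - c| * |(k:ℝ) - c| := this
      _ = ((k:ℝ) - c) ^ 2 := by rw [← abs_mul, ← sq, abs_sq]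
  have hkcsq : (0:ℝ) < ((k:ℝ) - c) ^ 2 := by
    have := sq_abs ((k:ℝ) - c)
    nlinarith [hkc]
  rw [abs_of_nonneg (by positivity : (0:ℝ) ≤ 1 / ((k:ℝ) - c)^2),
      abs_of_nonneg (by positivity : (0:ℝ) ≤ (|(k:ℝ)|^(2:ℕ))⁻¹)]
  rw [div_le_iff₀ hkcsq]
  have hk2 : (0:ℝ) < |(k:ℝ)| ^ 2 := by positivity
  have hinv : ((|(k:ℝ)|:ℝ)^2)⁻¹ * |(k:ℝ)|^2 = 1 := inv_mul_cancel₀ hk2.ne'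
  nlinarith [hsq, hk2, mul_pos (inv_pos.2 hk2) hk2]

lemma summable_sinc_sq (x : ℝ) : Summable (fun k : ℤ => _root_.sinc (x - k) ^ 2) := by
  refine Summable.of_norm_bounded_eventually (g := fun k => 1/π^2 * (1 / ((k:ℝ) - x) ^ 2))
    ((summable_inv_sq_shift x).mul_left _) ?_
  rw [Filter.eventually_cofinite]
  have hsub : {k : ℤ | ¬‖_root_.sinc (x - k) ^ 2‖ ≤ 1/π^2 * (1 / ((k:ℝ) - x) ^ 2)} ⊆
      {k : ℤ | (k:ℝ) = x} := by
    intro k hk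
    simp only [Set.mem_setOf_eq] at hk ⊢
    by_contra hne
    apply hk
    have hxk : x - (k:ℝ) ≠ 0 := fun h => hne (by linarith [sub_eq_zero.1 h])
    have := sinc_sq_le (x - k) hxk
    rw [Real.norm_eq_abs, abs_of_nonneg (sq_nonneg _)]
    calc _root_.sinc (x - k) ^ 2 ≤ 1 / (π^2 * (x - k)^2) := this
      _ = 1/π^2 * (1 / ((k:ℝ) - x) ^ 2) := by
          rw [div_mul_div_comm, one_mul]
          congr 1
          ring
  refine Set.Finite.subset ?_ hsub
  have : {k : ℤ | (k:ℝ) = x}.Subsingleton := by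
    intro a ha b hb
    simp only [Set.mem_setOf_eq] at ha hb
    exact_mod_cast ha.trans hb.symm
  exact this.finite

noncomputable def sincF (x : ℝ) : ℝ := ∑' k : ℤ, _root_.sinc (x - k) ^ 2

lemma finite_near (c R : ℝ) : {k : ℤ | ¬ (R ≤ |(k:ℝ) - c|)}.Finite := by
  refine Set.Finite.subset (Set.finite_Icc (⌈-(R + |c|)⌉) (⌊R + |c|⌋)) ?_
  intro k hk
  simp only [Set.mem_setOf_eq, not_le] at hk
  have h1 : |(k:ℝ)| ≤ R + |c| := by
    have := abs_sub_abs_le_abs_sub (k:ℝ) c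
    have h0 : |(k:ℝ) - c| < R := hk
    rcases le_or_gt R 0 with hR | hR
    · nlinarith [abs_nonneg ((k:ℝ) - c), abs_nonneg c, abs_nonneg (k:ℝ)]
    · linarith
  rw [abs_le] at h1
  constructor
  · exact Int.ceil_le.2 (by exact_mod_cast h1.1)
  · exact Int.le_floor.2 (by exact_mod_cast h1.2)

lemma sincF_continuous : Continuous sincF := by
  rw [continuous_iff_continuousAt]
  intro x₀
  have hu : Summable (fun k : ℤ => 4/π^2 * (1 / ((k:ℝ) - x₀) ^ 2)) :=
    (summable_inv_sq_shift x₀).mul_left _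
  have key : TendstoUniformlyOn (fun t : Finset ℤ => fun x => ∑ k ∈ t, _root_.sinc (x - k) ^ 2)
      (fun x => ∑' k : ℤ, _root_.sinc (x - k) ^ 2) Filter.atTop (Metric.ball x₀ 1) := by
    refine tendstoUniformlyOn_tsum_of_cofinite_eventually hu ?_
    rw [Filter.eventually_cofinite]
    refine (finite_near x₀ 2).subset ?_
    intro k hk
    simp only [Set.mem_setOf_eq] at hk ⊢
    intro hge
    apply hk
    intro x hx
    rw [Metric.mem_ball, Real.dist_eq] at hx
    -- |k - x₀| ≥ 2 and |x - x₀| < 1 ⇒ |x - k| ≥ |k - x₀| - 1 ≥ |k - x₀|/2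
    have h1 : |(k:ℝ) - x₀| / 2 ≤ |x - (k:ℝ)| := by
      have h2 : |(k:ℝ) - x₀| - |x - x₀| ≤ |x - (k:ℝ)| := by
        have := abs_sub_abs_le_abs_sub ((k:ℝ) - x₀) (x - x₀)
        have he : ((k:ℝ) - x₀) - (x - x₀) = (k:ℝ) - x := by ring
        rw [he] at this
        rw [abs_sub_comm x (k:ℝ)]
        exact le_trans this (le_of_eq rfl)
      linarith
    have hxk : x - (k:ℝ) ≠ 0 := by
      intro h
      rw [h, abs_zero] at h1
      linarith
    have hb := sinc_sq_le (x - k) hxk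
    rw [Real.norm_eq_abs, abs_of_nonneg (sq_nonneg _)]
    refine hb.trans ?_
    have hsq : ((k:ℝ) - x₀)^2 / 4 ≤ (x - (k:ℝ))^2 := by
      have := mul_le_mul h1 h1 (by positivity) (abs_nonneg _)
      calc ((k:ℝ) - x₀)^2 / 4 ≤ |(k:ℝ) - x₀|^2 / 4 := by rw [sq_abs]
        _ = (|(k:ℝ) - x₀|/2) * (|(k:ℝ) - x₀|/2) := by ring
        _ ≤ |x - (k:ℝ)| * |x - (k:ℝ)| := this
        _ = (x - (k:ℝ))^2 := by rw [← abs_mul, ← sq, abs_sq]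
    have hπ : (0:ℝ) < π ^ 2 := by positivity
    have hx2 : (0:ℝ) < (x - (k:ℝ))^2 := by
      have : (0:ℝ) < |x - (k:ℝ)| := abs_pos.2 hxk
      nlinarith [sq_abs (x - (k:ℝ))]
    have hk2 : (0:ℝ) < ((k:ℝ) - x₀)^2 := by nlinarith [sq_abs ((k:ℝ) - x₀)]
    rw [div_le_iff₀ (by positivity), mul_comm (4/π^2), mul_assoc]
    have h4 : 4/π^2 * (π^2 * (x - (k:ℝ))^2) = 4 * (x - (k:ℝ))^2 := by
      field_simp
    rw [h4, one_div]
    have hinv : (((k:ℝ) - x₀)^2)⁻¹ * ((k:ℝ) - x₀)^2 = 1 := inv_mul_cancel₀ hk2.ne'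
    nlinarith [mul_pos (inv_pos.2 hk2) hk2, hsq, inv_pos.2 hk2]
  have hcont : ContinuousOn sincF (Metric.ball x₀ 1) := by
    refine key.continuousOn ?_
    refine Filter.Frequently.of_forall fun t => ?_
    exact continuousOn_finset_sum t (fun k _ => ((sinc_continuous.comp
      (continuous_id.sub continuous_const)).pow 2).continuousOn)
  exact hcont.continuousAt (Metric.ball_mem_nhds x₀ one_pos)

lemma sincF_periodic : Function.Periodic sincF 1 := by
  intro x
  unfold sincF
  rw [← (Equiv.subRight (1:ℤ)).tsum_eq (fun k : ℤ => _root_.sinc (x - k) ^ 2)]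
  congr 1
  ext k
  simp only [Equiv.subRight_apply]
  congr 2
  push_cast
  ring

lemma sincF_int (n : ℤ) : sincF (n : ℝ) = 1 := by
  unfold sincF
  rw [tsum_eq_single n]
  · simp [_root_.sinc_zero]
  · intro k hk
    have : (n:ℝ) - k = ((n - k : ℤ) : ℝ) := by push_cast; ring
    rw [this, sinc_int_ne (sub_ne_zero.2 (Ne.symm hk))]
    ring

lemma sincF_zero : sincF 0 = 1 := by simpa using sincF_int 0

-- even/odd split for HasSum over ℤ
lemma hasSum_int_even_add_odd {f : ℤ → ℝ} {m m' : ℝ} (he : HasSum (fun k : ℤ => f (2 * k)) m)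
    (ho : HasSum (fun k : ℤ => f (2 * k + 1)) m') : HasSum f (m + m') := by
  have hinj : Function.Injective (fun k : ℤ => 2 * k) := fun a b h => by simpa using h
  replace ho := ((add_left_injective (1:ℤ)).comp hinj).hasSum_range_iff.2 ho
  refine (hinj.hasSum_range_iff.2 he).add_isCompl ?_ ho
  simpa [Function.comp_def] using Int.isCompl_even_odd

lemma sincF_funeq (x : ℝ) :
    sincF x = Real.cos (π * x / 2) ^ 2 * sincF (x / 2)
      + Real.sin (π * x / 2) ^ 2 * sincF ((x - 1) / 2) := by
  have he : HasSum (fun m : ℤ => _root_.sinc (x - ((2 * m : ℤ) : ℝ)) ^ 2)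
      (Real.cos (π * x / 2) ^ 2 * sincF (x / 2)) := by
    have h := (summable_sinc_sq (x / 2)).hasSum.mul_left (Real.cos (π * x / 2) ^ 2)
    have heq : (fun m : ℤ => _root_.sinc (x - ((2 * m : ℤ) : ℝ)) ^ 2)
        = fun m : ℤ => Real.cos (π * x / 2) ^ 2 * _root_.sinc (x / 2 - m) ^ 2 := by
      ext m
      rw [sinc_duplication (x - ((2 * m : ℤ) : ℝ))]
      have h1 : π * (x - ((2 * m : ℤ) : ℝ)) / 2 = π * x / 2 - (m : ℝ) * π := by push_cast; ring
      have h2 : (x - ((2 * m : ℤ) : ℝ)) / 2 = x / 2 - (m : ℝ) := by push_cast; ring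
      rw [h1, h2, mul_pow, cos_sub_int_mul_pi_sq]
    rw [heq]
    exact h
  have ho : HasSum (fun m : ℤ => _root_.sinc (x - ((2 * m + 1 : ℤ) : ℝ)) ^ 2)
      (Real.sin (π * x / 2) ^ 2 * sincF ((x - 1) / 2)) := by
    have h := (summable_sinc_sq ((x - 1) / 2)).hasSum.mul_left (Real.sin (π * x / 2) ^ 2)
    have heq : (fun m : ℤ => _root_.sinc (x - ((2 * m + 1 : ℤ) : ℝ)) ^ 2)
        = fun m : ℤ => Real.sin (π * x / 2) ^ 2 * _root_.sinc ((x - 1) / 2 - m) ^ 2 := by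
      ext m
      rw [sinc_duplication (x - ((2 * m + 1 : ℤ) : ℝ))]
      have h1 : π * (x - ((2 * m + 1 : ℤ) : ℝ)) / 2 = (π * x / 2 - π / 2) - (m : ℝ) * π := by
        push_cast; ring
      have h2 : (x - ((2 * m + 1 : ℤ) : ℝ)) / 2 = (x - 1) / 2 - (m : ℝ) := by push_cast; ring
      rw [h1, h2, mul_pow, cos_sub_int_mul_pi_sq, Real.cos_sub_pi_div_two]
    rw [heq]
    exact h
  have := hasSum_int_even_add_odd (f := fun k : ℤ => _root_.sinc (x - k) ^ 2) he ho
  rw [← this.tsum_eq]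
  rfl

lemma herglotz_le {D : ℝ → ℝ} (hc : Continuous D) (hper : Function.Periodic D 1)
    (h1 : D 1 = 0)
    (hfe : ∀ x, D x = Real.cos (π * x / 2) ^ 2 * D (x / 2)
      + Real.sin (π * x / 2) ^ 2 * D ((x - 1) / 2)) :
    ∀ x, D x ≤ 0 := by
  have h0 : D 0 = 0 := by
    have := hper 0
    rw [zero_add] at this
    rw [← this, h1]
  obtain ⟨x₀, hx₀mem, hx₀max⟩ := (isCompact_Icc (a := (0:ℝ)) (b := 1)).exists_isMaxOn
    ⟨0, by norm_num⟩ hc.continuousOn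
  set M := D x₀ with hM
  have hle : ∀ y ∈ Set.Icc (0:ℝ) 1, D y ≤ M := fun y hy => hx₀max hy
  have hall : ∀ x, D x ≤ M := by
    intro x
    have hfr : D x = D (Int.fract x) := by
      have h := hper.sub_int_mul_eq (x := x) ⌊x⌋
      rw [mul_one] at h
      rw [Int.fract]
      exact h.symm
    rw [hfr]
    exact hle _ ⟨Int.fract_nonneg x, (Int.fract_lt_one x).le⟩
  rcases le_or_gt M 0 with hM0 | hM0
  · exact fun x => (hall x).trans hM0
  · exfalso
    -- step lemma
    have step : ∀ y, y ∈ Set.Ico (0:ℝ) 1 → D y = M → D (y / 2) = M ∧ y / 2 ∈ Set.Ico (0:ℝ) 1 := by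
      intro y hy hDy
      have hmem2 : y / 2 ∈ Set.Ico (0:ℝ) 1 := ⟨by linarith [hy.1], by linarith [hy.2]⟩
      refine ⟨?_, hmem2⟩
      have ha : D (y / 2) ≤ M := hall _
      have hb : D ((y - 1) / 2) ≤ M := hall _
      have hcpos : 0 < Real.cos (π * y / 2) := by
        apply Real.cos_pos_of_mem_Ioo
        constructor
        · have h2 : (0:ℝ) ≤ π * y / 2 := by
            have := hy.1
            positivity
          have := Real.pi_pos
          linarith
        · have := Real.pi_pos
          nlinarith [hy.2]
      have hid : Real.sin (π * y / 2) ^ 2 + Real.cos (π * y / 2) ^ 2 = 1 :=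
        Real.sin_sq_add_cos_sq _
      have heq := hfe y
      rw [hDy] at heq
      nlinarith [sq_nonneg (Real.cos (π * y / 2)), sq_nonneg (Real.sin (π * y / 2)),
        mul_pos hcpos hcpos]
    -- if x₀ = 1, M = 0 contradiction; else iterate halving
    have hx1 : x₀ ∈ Set.Ico (0:ℝ) 1 := by
      rcases eq_or_lt_of_le hx₀mem.2 with h | h
      · exfalso
        have hM1 : M = 0 := by rw [hM, h, h1]
        rw [hM1] at hM0
        exact lt_irrefl 0 hM0
      · exact ⟨hx₀mem.1, h⟩
    have hseq : ∀ n : ℕ, D (x₀ / 2 ^ n) = M ∧ x₀ / 2 ^ n ∈ Set.Ico (0:ℝ) 1 := by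
      intro n
      induction n with
      | zero =>
        simp only [pow_zero, div_one]
        exact ⟨hM.symm, hx1⟩
      | succ n ih =>
        have := step _ ih.2 ih.1
        have harg : x₀ / 2 ^ n / 2 = x₀ / 2 ^ (n + 1) := by
          rw [div_div, pow_succ]
        rw [harg] at this
        exact this
    have htend : Filter.Tendsto (fun n : ℕ => x₀ / 2 ^ n) Filter.atTop (nhds 0) := by
      have h2 : Filter.Tendsto (fun n : ℕ => ((1:ℝ)/2) ^ n) Filter.atTop (nhds 0) :=
        tendsto_pow_atTop_nhds_zero_of_lt_one (by norm_num) (by norm_num)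
      have := h2.const_mul x₀
      rw [mul_zero] at this
      refine this.congr fun n => ?_
      rw [div_pow, one_pow]
      ring
    have hD := (hc.tendsto 0).comp htend
    have hconst : (fun n : ℕ => D (x₀ / 2 ^ n)) = fun _ => M := funext fun n => (hseq n).1
    rw [show (D ∘ fun n : ℕ => x₀ / 2 ^ n) = fun n : ℕ => D (x₀ / 2 ^ n) from rfl,
      hconst, h0] at hD
    have := tendsto_nhds_unique tendsto_const_nhds hD
    rw [this] at hM0
    exact lt_irrefl 0 hM0

lemma sincF_eq_one (x : ℝ) : sincF x = 1 := by
  set D : ℝ → ℝ := fun y => sincF y - 1 with hD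
  have hper : Function.Periodic D 1 := fun y => by simp only [hD, sincF_periodic y]
  have hcont : Continuous D := sincF_continuous.sub continuous_const
  have h1 : D 1 = 0 := by
    have : sincF 1 = 1 := by exact_mod_cast sincF_int 1
    simp only [hD, this, sub_self]
  have hfe : ∀ y, D y = Real.cos (π * y / 2) ^ 2 * D (y / 2)
      + Real.sin (π * y / 2) ^ 2 * D ((y - 1) / 2) := by
    intro y
    have hid : Real.sin (π * y / 2) ^ 2 + Real.cos (π * y / 2) ^ 2 = 1 :=
      Real.sin_sq_add_cos_sq _
    simp only [hD]
    rw [sincF_funeq y]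
    nlinarith [hid]
  have hneg : ∀ y, (fun z => -D z) y = Real.cos (π * y / 2) ^ 2 * (fun z => -D z) (y / 2)
      + Real.sin (π * y / 2) ^ 2 * (fun z => -D z) ((y - 1) / 2) := by
    intro y
    simp only
    rw [hfe y]
    ring
  have hle := herglotz_le hcont hper h1 hfe x
  have hge := herglotz_le (hcont.neg) (fun y => by simp [hper y]) (by simp [h1]) hneg x
  simp only [hD] at hle hge
  simp only [Pi.neg_apply, neg_sub] at hge
  linarith

/-- The squared-sinc partition of unity: for all t and Δ>0,
∑_{k ∈ ℤ} sinc²(Δt − k) = 1. -/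
theorem tsum_sinc_sq_eq_one (Δ : ℝ) (hΔ : 0 < Δ) (t : ℝ) :
    ∑' k : ℤ, (_root_.sinc (Δ * t - (k : ℝ)))^2 = 1 := sincF_eq_one (Δ * t)
end

section
/- The posterior variance of a centred sinc-kernel GP observed noiselessly at all points t_k = k/Δ, k ∈ ℤ, given by V(t) = σ²(1 − ∑_{k∈ℤ} sinc²(Δt − k)), is identically zero for all t ∈ ℝ. -/
open Real

section Helpers

open MeasureTheory Complex AddCircle

lemma exp_diff (θ : ℝ) : Complex.exp ((θ:ℂ) * Complex.I) - Complex.exp (-((θ:ℂ) * Complex.I))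
    = 2 * Complex.I * (Real.sin θ : ℂ) := by
  rw [Complex.exp_mul_I, ← neg_mul, Complex.exp_mul_I, Complex.cos_neg, Complex.sin_neg,
    ← Complex.ofReal_sin]
  ring

lemma coeff_eq (x : ℝ) (n : ℤ) :
    (∫ s in (-(1/2):ℝ)..(-(1/2)+1), Complex.exp (2 * π * Complex.I * (x - n) * s))
      = (_root_.sinc (x - n) : ℂ) := by
  have hcast : ((x:ℂ) - (n:ℂ)) = ((x - (n:ℝ) : ℝ) : ℂ) := by push_cast; ring
  rcases eq_or_ne (x - (n:ℝ)) 0 with h | h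
  · rw [hcast, h]
    simp [_root_.sinc]
  · have hc : (2 * π * Complex.I * ((x:ℂ) - n)) ≠ 0 := by
      rw [hcast]
      simp only [mul_ne_zero_iff, Ne, Complex.I_ne_zero, not_false_iff, and_true,
        Complex.ofReal_eq_zero]
      exact ⟨⟨two_ne_zero, by exact_mod_cast Complex.ofReal_ne_zero.2 Real.pi_ne_zero⟩, h⟩
    rw [integral_exp_mul_complex hc, _root_.sinc, if_neg h, div_eq_iff hc]
    have e1 : 2 * (π:ℂ) * Complex.I * ((x:ℂ) - ↑n) * ((-(1/2)+1 : ℝ):ℂ)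
        = ((π * (x - n) : ℝ):ℂ) * Complex.I := by push_cast; ring
    have e2 : 2 * (π:ℂ) * Complex.I * ((x:ℂ) - ↑n) * ((-(1/2) : ℝ):ℂ)
        = -(((π * (x - n) : ℝ):ℂ) * Complex.I) := by push_cast; ring
    rw [e1, e2, exp_diff, hcast]
    have hne : ((π * (x - n) : ℝ)) ≠ 0 := mul_ne_zero Real.pi_ne_zero h
    have hne' : ((π * (x - (n:ℝ)) : ℝ):ℂ) ≠ 0 := Complex.ofReal_ne_zero.2 hne
    have hz : ((π:ℂ) * x - (π:ℂ) * n) ≠ 0 := by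
      intro h0
      apply hne'
      push_cast
      linear_combination h0
    rw [Complex.ofReal_div, div_mul_eq_mul_div, eq_comm, div_eq_iff hne']
    push_cast
    ring

lemma tsum_sinc_sq (x : ℝ) : ∑' k : ℤ, (_root_.sinc (x - k))^2 = 1 := by
  haveI : Fact (0 < (1:ℝ)) := ⟨one_pos⟩
  set g : ℝ → ℂ := fun s => Complex.exp (2 * π * Complex.I * x * s) with hg
  have hgc : Continuous g := by
    exact Complex.continuous_exp.comp (by continuity)
  set F : AddCircle (1:ℝ) → ℂ := AddCircle.liftIoc 1 (-(1/2)) g with hF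
  have hFm : Measurable F := by
    have h1 : Measurable (AddCircle.equivIoc (1:ℝ) (-(1/2))) :=
      (AddCircle.measurableEquivIoc 1 (-(1/2))).measurable
    exact (hgc.measurable.comp measurable_subtype_coe).comp h1
  have hg1 : ∀ s : ℝ, ‖g s‖ = 1 := by
    intro s
    simp [hg, Complex.norm_exp]
  have hF1 : ∀ z, ‖F z‖ = 1 := fun z => hg1 _
  have hmem : MemLp F 2 haarAddCircle :=
    MemLp.of_bound hFm.aestronglyMeasurable 1 (Filter.Eventually.of_forall fun z => (hF1 z).le)
  set fL := hmem.toLp F with hfL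
  have hae := hmem.coeFn_toLp
  have hcoeff : ∀ n : ℤ, fourierCoeff (⇑fL) n = (_root_.sinc (x - n) : ℂ) := by
    intro n
    have h1 : fourierCoeff (⇑fL) n = fourierCoeff F n := by
      unfold fourierCoeff
      refine integral_congr_ae ?_
      filter_upwards [hae] with z hz
      rw [hz]
    rw [h1, hF, fourierCoeff_liftIoc_eq, fourierCoeffOn_eq_integral]
    have hint : (∫ s in (-(1/2):ℝ)..(-(1/2)+1), fourier (-n) (s : AddCircle ((-(1/2:ℝ)+1) - (-(1/2)))) • g s)
        = ∫ s in (-(1/2):ℝ)..(-(1/2)+1), Complex.exp (2 * π * Complex.I * (x - n) * s) := by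
      refine intervalIntegral.integral_congr fun s _ => ?_
      have hT : ((-(1/2:ℝ)+1) - (-(1/2))) = (1:ℝ) := by norm_num
      rw [smul_eq_mul, hg, fourier_coe_apply]
      rw [← Complex.exp_add]
      congr 1
      rw [hT]
      push_cast
      ring
    rw [hint, coeff_eq]
    norm_num
  have hpars := tsum_sq_fourierCoeff fL
  have hrhs : (∫ z : AddCircle (1:ℝ), ‖(⇑fL) z‖ ^ 2 ∂haarAddCircle) = 1 := by
    rw [integral_congr_ae (g := fun _ => (1:ℝ)) ?_]
    · simp
    · filter_upwards [hae] with z hz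
      rw [hz, hF1, one_pow]
  rw [hrhs] at hpars
  rw [← hpars]
  congr 1
  funext k
  rw [hcoeff k, Complex.norm_real, Real.norm_eq_abs, _root_.sq_abs]

end Helpers

/-- The posterior variance of a centred sinc-kernel GP under noiseless
Nyquist-rate sampling at all points k/Δ vanishes identically. -/
theorem sinc_gp_posterior_variance_vanishes
    (σ2 Δ : ℝ) (hσ : 0 < σ2) (hΔ : 0 < Δ) (t : ℝ) :
    σ2 * (1 - ∑' k : ℤ, (_root_.sinc (Δ * t - (k : ℝ)))^2) = 0 := by
  rw [tsum_sinc_sq (Δ * t)]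
  ring
end
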